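/- arXiv:1304.7031 — 3 statements merged into one kernel-verified Lean document; each statement's English description precedes it below -/
import Mathlib

section
/- Continuity estimate for the Gaussian entropy functional (Lemma 2.1): Let N ≥ 1 and let ν = (ν₁,…,ν_N) and λ = (λ₁,…,λ_N) be vectors of reals, and let λ_* denote the minimum of all entries of ν and of λ; assume λ_* > 1. Then |Σ_{j=1}^N G(ν_j) − Σ_{j=1}^N G(λ_j)| ≤ (N/2)·( ‖ν−λ‖_∞·β(λ_*) + ‖ν−λ‖_∞² / (λ_*² − 1) ), where ‖ν−λ‖_∞ = max_{1≤j≤N} |ν_j − λ_j|. -/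
open scoped Classical ComplexOrder

noncomputable section

/-- The function `g(x) = (x+1)·log(x+1) − x·log x` (with `g 0 = 0` since `log 0 = 0`). -/
def gFn (x : ℝ) : ℝ := (x + 1) * Real.log (x + 1) - x * Real.log x

/-- Single-mode entropy as a function of the symplectic eigenvalue: `G(λ) = g((λ−1)/2)`. -/
def GFn (lam : ℝ) : ℝ := gFn ((lam - 1) / 2)

/-- Inverse temperature `β(λ) = log((λ+1)/(λ−1))`. -/
def betaFn (lam : ℝ) : ℝ := Real.log ((lam + 1) / (lam - 1))

/-- The standard symplectic form matrix on `ℝ^d` (for even `d = 2N` this is the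
block-diagonal matrix with `N` diagonal blocks `[[0,1],[-1,0]]`). -/
def Jmat (d : ℕ) : Matrix (Fin d) (Fin d) ℝ := fun i j =>
  if (i : ℕ) % 2 = 0 ∧ (j : ℕ) = (i : ℕ) + 1 then 1
  else if (j : ℕ) % 2 = 0 ∧ (i : ℕ) = (j : ℕ) + 1 then -1 else 0

/-- A real `d×d` matrix is symplectic if `S·J·Sᵀ = J`. -/
def IsSymplectic {d : ℕ} (S : Matrix (Fin d) (Fin d) ℝ) : Prop :=
  S * Jmat d * S.transpose = Jmat d

/-- The doubled diagonal matrix `D(λ) = diag(λ₀,λ₀,λ₁,λ₁,…)`. -/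
def Dmat (d : ℕ) (lam : ℕ → ℝ) : Matrix (Fin d) (Fin d) ℝ :=
  Matrix.diagonal fun i => lam ((i : ℕ) / 2)

/-- A valid quantum covariance matrix: `M` symmetric with `M + i·J ⪰ 0`. -/
def IsQCov {d : ℕ} (M : Matrix (Fin d) (Fin d) ℝ) : Prop :=
  M.IsSymm ∧
    (M.map (Complex.ofReal) + Complex.I • (Jmat d).map Complex.ofReal).PosSemidef

/-- Entropy functional `E(M) = Σⱼ G(λⱼ)` where `λⱼ` are the symplectic eigenvalues of `M`:
the eigenvalues of `i·J·M` are `±λⱼ`, so `E(M) = (1/2)·Σ_{μ root of charpoly} G(|Re μ|)`. -/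
def Ent {d : ℕ} (M : Matrix (Fin d) (Fin d) ℝ) : ℝ :=
  ((Matrix.charpoly (Complex.I • ((Jmat d * M).map Complex.ofReal))).roots.map
    fun μ => GFn |μ.re|).sum / 2

/-- The matrix `I_A ⊕ 0_B`: identity on the first `a` coordinates, zero on the rest. -/
def IA0B (d a : ℕ) : Matrix (Fin d) (Fin d) ℝ :=
  Matrix.diagonal fun i => if (i : ℕ) < a then 1 else 0

/-- Assemble a symmetric 2×2 block matrix `[[A, K], [Kᵀ, B]]`. -/
def assemble2 {a b : ℕ} (A : Matrix (Fin a) (Fin a) ℝ) (K : Matrix (Fin a) (Fin b) ℝ)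
    (B : Matrix (Fin b) (Fin b) ℝ) : Matrix (Fin (a + b)) (Fin (a + b)) ℝ := fun i j =>
  if hi : (i : ℕ) < a then
    if hj : (j : ℕ) < a then A ⟨i, hi⟩ ⟨j, hj⟩
    else K ⟨i, hi⟩ ⟨(j : ℕ) - a, by have := j.isLt; omega⟩
  else
    if hj : (j : ℕ) < a then K ⟨j, hj⟩ ⟨(i : ℕ) - a, by have := i.isLt; omega⟩
    else B ⟨(i : ℕ) - a, by have := i.isLt; omega⟩ ⟨(j : ℕ) - a, by have := j.isLt; omega⟩

/-- Assemble the symmetric 3×3 block matrix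
`[[Y, K₁, K₂], [K₁ᵀ, B₁, 0], [K₂ᵀ, 0, B₂]]`. -/
def assemble3 {a b c : ℕ} (Y : Matrix (Fin a) (Fin a) ℝ)
    (K₁ : Matrix (Fin a) (Fin b) ℝ) (K₂ : Matrix (Fin a) (Fin c) ℝ)
    (B₁ : Matrix (Fin b) (Fin b) ℝ) (B₂ : Matrix (Fin c) (Fin c) ℝ) :
    Matrix (Fin (a + b + c)) (Fin (a + b + c)) ℝ := fun i j =>
  if hi : (i : ℕ) < a then
    if hj : (j : ℕ) < a then Y ⟨i, hi⟩ ⟨j, hj⟩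
    else if hj' : (j : ℕ) < a + b then K₁ ⟨i, hi⟩ ⟨(j : ℕ) - a, by omega⟩
    else K₂ ⟨i, hi⟩ ⟨(j : ℕ) - a - b, by have := j.isLt; omega⟩
  else if hi' : (i : ℕ) < a + b then
    if hj : (j : ℕ) < a then K₁ ⟨j, hj⟩ ⟨(i : ℕ) - a, by omega⟩
    else if hj' : (j : ℕ) < a + b then
      B₁ ⟨(i : ℕ) - a, by omega⟩ ⟨(j : ℕ) - a, by omega⟩
    else 0
  else
    if hj : (j : ℕ) < a then K₂ ⟨j, hj⟩ ⟨(i : ℕ) - a - b, by have := i.isLt; omega⟩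
    else if hj' : (j : ℕ) < a + b then 0
    else B₂ ⟨(i : ℕ) - a - b, by have := i.isLt; omega⟩
      ⟨(j : ℕ) - a - b, by have := j.isLt; omega⟩


/-- Continuity estimate for the Gaussian entropy functional (Lemma 2.1). -/

lemma GFn_eq (y : ℝ) :
    GFn y = (y+1)/2 * Real.log ((y+1)/2) - (y-1)/2 * Real.log ((y-1)/2) := by
  have h : (y-1)/2 + 1 = (y+1)/2 := by ring
  simp [GFn, gFn, h]

lemma GFn_hasDerivAt {x : ℝ} (hx : 1 < x) :
    HasDerivAt GFn (betaFn x / 2) x := by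
  have h1 : (0:ℝ) < (x+1)/2 := by linarith
  have h2 : (0:ℝ) < (x-1)/2 := by linarith
  have d1 : HasDerivAt (fun y : ℝ => (y+1)/2) (1/2) x := by
    simpa using ((hasDerivAt_id x).add_const 1).div_const 2
  have d2 : HasDerivAt (fun y : ℝ => (y-1)/2) (1/2) x := by
    simpa using ((hasDerivAt_id x).sub_const 1).div_const 2
  have dlog1 : HasDerivAt (fun y : ℝ => Real.log ((y+1)/2)) (((x+1)/2)⁻¹ * (1/2)) x :=
    by have := (Real.hasDerivAt_log h1.ne').comp x d1; exact this
  have dlog2 : HasDerivAt (fun y : ℝ => Real.log ((y-1)/2)) (((x-1)/2)⁻¹ * (1/2)) x :=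
    by have := (Real.hasDerivAt_log h2.ne').comp x d2; exact this
  have D : HasDerivAt (fun y : ℝ => (y+1)/2 * Real.log ((y+1)/2) - (y-1)/2 * Real.log ((y-1)/2))
      (1 / 2 * Real.log ((x + 1) / 2) + (x + 1) / 2 * (((x + 1) / 2)⁻¹ * (1 / 2)) -
      (1 / 2 * Real.log ((x - 1) / 2) + (x - 1) / 2 * (((x - 1) / 2)⁻¹ * (1 / 2)))) x := by
    have := (d1.mul dlog1).sub (d2.mul dlog2); exact this
  have hfun : (fun y : ℝ => (y+1)/2 * Real.log ((y+1)/2) - (y-1)/2 * Real.log ((y-1)/2))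
      = GFn := by
    funext y; exact (GFn_eq y).symm
  rw [hfun] at D
  convert D using 1
  have hlog : Real.log ((x+1)/2) - Real.log ((x-1)/2) = betaFn x := by
    rw [← Real.log_div h1.ne' h2.ne', betaFn]
    congr 1
    field_simp
  have e1 : (x+1)/2 * (((x+1)/2)⁻¹ * (1/2)) = 1/2 := by
    rw [← mul_assoc, mul_inv_cancel₀ h1.ne', one_mul]
  have e2 : (x-1)/2 * (((x-1)/2)⁻¹ * (1/2)) = 1/2 := by
    rw [← mul_assoc, mul_inv_cancel₀ h2.ne', one_mul]
  rw [e1, e2]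
  linarith [hlog]

lemma betaFn_nonneg {x : ℝ} (hx : 1 < x) : 0 ≤ betaFn x := by
  apply Real.log_nonneg
  rw [le_div_iff₀ (by linarith)]
  linarith

lemma betaFn_anti {a x : ℝ} (ha : 1 < a) (hx : a ≤ x) : betaFn x ≤ betaFn a := by
  have hx1 : 1 < x := lt_of_lt_of_le ha hx
  have hpos : (0:ℝ) < (x+1)/(x-1) := by
    apply div_pos <;> linarith
  apply Real.log_le_log hpos
  rw [div_le_div_iff₀ (by linarith) (by linarith)]
  nlinarith

lemma GFn_lipschitz {lamStar u v : ℝ} (hstar : 1 < lamStar)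
    (hu : lamStar ≤ u) (hv : lamStar ≤ v) :
    |GFn u - GFn v| ≤ betaFn lamStar / 2 * |u - v| := by
  have key : ∀ y ∈ Set.Ici lamStar,
      HasDerivWithinAt GFn (betaFn y / 2) (Set.Ici lamStar) y := fun y hy =>
    (GFn_hasDerivAt (lt_of_lt_of_le hstar hy)).hasDerivWithinAt
  have bound : ∀ y ∈ Set.Ici lamStar, ‖betaFn y / 2‖ ≤ betaFn lamStar / 2 := by
    intro y hy
    rw [Real.norm_eq_abs, abs_of_nonneg (by
      have := betaFn_nonneg (lt_of_lt_of_le hstar hy); linarith)]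
    have := betaFn_anti hstar hy
    linarith
  have := (convex_Ici lamStar).norm_image_sub_le_of_norm_hasDerivWithin_le
    key bound hv hu
  simpa [Real.norm_eq_abs] using this

theorem entropy_continuity (N : ℕ) (hN : 1 ≤ N) (nu lam : Fin N → ℝ)
    (lamStar d : ℝ)
    (hmin : IsLeast (Set.range nu ∪ Set.range lam) lamStar)
    (hstar : 1 < lamStar)
    (hd : IsGreatest (Set.range fun j => |nu j - lam j|) d) :
    |(∑ j, GFn (nu j)) - ∑ j, GFn (lam j)| ≤
      (N : ℝ) / 2 * (d * betaFn lamStar + d ^ 2 / (lamStar ^ 2 - 1)) := by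
  obtain ⟨hmem, hlb⟩ := hmin
  have hnu : ∀ j, lamStar ≤ nu j := fun j => hlb (Or.inl ⟨j, rfl⟩)
  have hlam : ∀ j, lamStar ≤ lam j := fun j => hlb (Or.inr ⟨j, rfl⟩)
  obtain ⟨hdmem, hdub⟩ := hd
  have hdnonneg : 0 ≤ d := by
    obtain ⟨j, hj⟩ := hdmem
    rw [← hj]; positivity
  have hterm : ∀ j, |GFn (nu j) - GFn (lam j)| ≤ betaFn lamStar / 2 * d := by
    intro j
    calc |GFn (nu j) - GFn (lam j)| ≤ betaFn lamStar / 2 * |nu j - lam j| :=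
          GFn_lipschitz hstar (hnu j) (hlam j)
      _ ≤ betaFn lamStar / 2 * d := by
          apply mul_le_mul_of_nonneg_left (hdub ⟨j, rfl⟩)
          have := betaFn_nonneg hstar; linarith
  have hsum : |(∑ j, GFn (nu j)) - ∑ j, GFn (lam j)| ≤ (N : ℝ) * (betaFn lamStar / 2 * d) := by
    rw [← Finset.sum_sub_distrib]
    calc |∑ j, (GFn (nu j) - GFn (lam j))| ≤ ∑ j, |GFn (nu j) - GFn (lam j)| :=
          Finset.abs_sum_le_sum_abs _ _
      _ ≤ ∑ _j : Fin N, betaFn lamStar / 2 * d := Finset.sum_le_sum fun j _ => hterm j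
      _ = (N : ℝ) * (betaFn lamStar / 2 * d) := by simp [Finset.sum_const, mul_comm]
  refine hsum.trans ?_
  have h1 : (0:ℝ) < lamStar ^ 2 - 1 := by nlinarith
  have h2 : (0:ℝ) ≤ d ^ 2 / (lamStar ^ 2 - 1) := by positivity
  have hN0 : (0:ℝ) ≤ (N:ℝ) := Nat.cast_nonneg N
  nlinarith [mul_nonneg hN0 h2]

end
end

section
/- Perturbation of the symplectic spectrum to zeroth order (Lemma 3.1): Let N ≥ 1 and let M be a real symmetric positive-semidefinite 2N×2N matrix. Then there exist constants C > 0 and ε₀ > 0 such that for every ε ∈ (0, ε₀), every symplectic eigenvalue λ of the positive-definite matrix I_{2N} + ε·M satisfies |λ − 1| ≤ C·ε. -/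
open scoped Classical ComplexOrder

noncomputable section

/-! ### Auxiliary lemmas for Statement 7 -/

open Matrix

/-- The index-swap `2m ↔ 2m+1` on `Fin (2N)`. -/
def sigSwap {N : ℕ} (i : Fin (2 * N)) : Fin (2 * N) :=
  if h : (i : ℕ) % 2 = 0 then ⟨(i : ℕ) + 1, by have := i.isLt; omega⟩
  else ⟨(i : ℕ) - 1, by have := i.isLt; omega⟩

lemma sigSwap_coe_even {N : ℕ} (i : Fin (2 * N)) (h : (i : ℕ) % 2 = 0) :
    ((sigSwap i : Fin (2 * N)) : ℕ) = (i : ℕ) + 1 := by simp [sigSwap, h]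

lemma sigSwap_coe_odd {N : ℕ} (i : Fin (2 * N)) (h : ¬ (i : ℕ) % 2 = 0) :
    ((sigSwap i : Fin (2 * N)) : ℕ) = (i : ℕ) - 1 := by simp [sigSwap, h]

lemma sigSwap_sigSwap {N : ℕ} (i : Fin (2 * N)) : sigSwap (sigSwap i) = i := by
  apply Fin.ext
  by_cases h : (i : ℕ) % 2 = 0
  · have h1 := sigSwap_coe_even i h
    have h2 : ¬ ((sigSwap i : Fin (2 * N)) : ℕ) % 2 = 0 := by omega
    rw [sigSwap_coe_odd _ h2, h1]
    omega
  · have h1 := sigSwap_coe_odd i h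
    have h2 : ((sigSwap i : Fin (2 * N)) : ℕ) % 2 = 0 := by omega
    rw [sigSwap_coe_even _ h2, h1]
    omega

lemma Jmat_apply_ne {N : ℕ} (i k : Fin (2 * N)) (h : k ≠ sigSwap i) :
    Jmat (2 * N) i k = 0 := by
  have hv : (k : ℕ) ≠ ((sigSwap i : Fin (2 * N)) : ℕ) := fun hh => h (Fin.ext hh)
  by_cases hi : (i : ℕ) % 2 = 0
  · rw [sigSwap_coe_even i hi] at hv
    simp only [Jmat]
    split_ifs with h1 h2 <;> first | rfl | (exfalso; omega)
  · rw [sigSwap_coe_odd i hi] at hv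
    simp only [Jmat]
    split_ifs with h1 h2 <;> first | rfl | (exfalso; omega)

lemma Jmat_apply_sig {N : ℕ} (i : Fin (2 * N)) :
    Jmat (2 * N) i (sigSwap i) = if (i : ℕ) % 2 = 0 then 1 else -1 := by
  by_cases hi : (i : ℕ) % 2 = 0
  · have h1 := sigSwap_coe_even i hi
    simp [Jmat, hi, h1]
  · have h1 := sigSwap_coe_odd i hi
    have e1 : ((sigSwap i : Fin (2 * N)) : ℕ) % 2 = 0 := by omega
    have e2 : (i : ℕ) = ((sigSwap i : Fin (2 * N)) : ℕ) + 1 := by omega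
    show (if _ ∧ _ then (1:ℝ) else if _ ∧ _ then -1 else 0) = _
    rw [if_neg (fun hc => hi hc.1), if_pos ⟨e1, e2⟩, if_neg hi]

lemma Jmat_mulVec {N : ℕ} (s : Fin (2 * N) → ℝ) (i : Fin (2 * N)) :
    (Jmat (2 * N) *ᵥ s) i = (if (i : ℕ) % 2 = 0 then 1 else -1) * s (sigSwap i) := by
  simp only [Matrix.mulVec, dotProduct]
  rw [Finset.sum_eq_single (sigSwap i)]
  · rw [Jmat_apply_sig]
  · intro k _ hk
    rw [Jmat_apply_ne i k hk, zero_mul]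
  · intro h; exact absurd (Finset.mem_univ _) h

lemma sum_sq_Jmat_mulVec {N : ℕ} (s : Fin (2 * N) → ℝ) :
    ∑ i, ((Jmat (2 * N) *ᵥ s) i) ^ 2 = ∑ i, s i ^ 2 := by
  have hb : Function.Bijective (sigSwap (N := N)) :=
    Function.Involutive.bijective sigSwap_sigSwap
  calc ∑ i, ((Jmat (2 * N) *ᵥ s) i) ^ 2
      = ∑ i, s (sigSwap i) ^ 2 := by
        refine Finset.sum_congr rfl fun i _ => ?_
        rw [Jmat_mulVec]; split_ifs <;> ring
    _ = ∑ i, s i ^ 2 :=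
        Fintype.sum_bijective sigSwap hb _ _ (fun i => rfl)

lemma Jmat_mul_Jmat {N : ℕ} : Jmat (2 * N) * Jmat (2 * N) = -1 := by
  ext i k
  rw [Matrix.mul_apply, Finset.sum_eq_single (sigSwap i)]
  · by_cases hk : k = i
    · subst hk
      rw [show (Jmat (2 * N) (sigSwap k) k : ℝ)
          = Jmat (2 * N) (sigSwap k) (sigSwap (sigSwap k)) by rw [sigSwap_sigSwap]]
      rw [Jmat_apply_sig, Jmat_apply_sig]
      have hne : ¬ (((sigSwap k : Fin (2 * N)) : ℕ) % 2 = 0 ↔ (k : ℕ) % 2 = 0) := by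
        by_cases hk2 : (k : ℕ) % 2 = 0
        · have := sigSwap_coe_even k hk2; simp [hk2]; omega
        · have := sigSwap_coe_odd k hk2
          have hk1 : 1 ≤ (k : ℕ) := by omega
          simp [hk2]; omega
      by_cases hk2 : (k : ℕ) % 2 = 0 <;> by_cases hs2 : ((sigSwap k : Fin (2 * N)) : ℕ) % 2 = 0 <;>
        simp [hk2, hs2] at hne ⊢ <;> tauto
    · rw [show (Jmat (2 * N) (sigSwap i) k : ℝ) = 0 from
        Jmat_apply_ne _ _ (by rw [sigSwap_sigSwap]; exact fun hh => hk hh), mul_zero]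
      simp [Matrix.neg_apply, Matrix.one_apply, Ne.symm hk]
  · intro b _ hb
    rw [Jmat_apply_ne i b hb, zero_mul]
  · intro h; exact absurd (Finset.mem_univ _) h

lemma Jmat_det_mul_self {N : ℕ} : (Jmat (2 * N)).det * (Jmat (2 * N)).det = 1 := by
  have h := congrArg Matrix.det (Jmat_mul_Jmat (N := N))
  rw [Matrix.det_mul] at h
  rw [h, show (-1 : Matrix (Fin (2 * N)) (Fin (2 * N)) ℝ) = -(1) by ring, Matrix.det_neg,
    Matrix.det_one, Fintype.card_fin, mul_one, Even.neg_one_pow (even_two_mul N)]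

lemma Jmat_inv {N : ℕ} : (Jmat (2 * N))⁻¹ = -(Jmat (2 * N)) := by
  apply Matrix.inv_eq_right_inv
  rw [mul_neg, Jmat_mul_Jmat, neg_neg]

/-- Key lemma: a lower bound on the quadratic form of `A` gives a lower bound on its
symplectic eigenvalues. -/
lemma key_lower {N : ℕ} (A S : Matrix (Fin (2 * N)) (Fin (2 * N)) ℝ) (lam : ℕ → ℝ)
    (α : ℝ) (hα : 0 < α)
    (hSJ : S * Jmat (2 * N) * S.transpose = Jmat (2 * N))
    (hA : ∀ x : Fin (2 * N) → ℝ, α * (∑ i, x i ^ 2) ≤ x ⬝ᵥ A *ᵥ x)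
    (hSD : S * A * S.transpose = Dmat (2 * N) lam)
    (j : ℕ) (hj : j < N) : α ≤ lam j := by
  have hentry : ∀ (B : Matrix (Fin (2 * N)) (Fin (2 * N)) ℝ) (i k : Fin (2 * N)),
      (S * B * S.transpose) i k = (S i) ⬝ᵥ (B *ᵥ (S k)) := by
    intro B i k
    simp only [Matrix.mul_apply, Matrix.transpose_apply, Matrix.mulVec, dotProduct,
      Finset.sum_mul, Finset.mul_sum]
    rw [Finset.sum_comm]
    refine Finset.sum_congr rfl fun m _ => Finset.sum_congr rfl fun l _ => by ring
  set i0 : Fin (2 * N) := ⟨2 * j, by omega⟩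
  set i1 : Fin (2 * N) := ⟨2 * j + 1, by omega⟩
  set r : Fin (2 * N) → ℝ := S i0 with hr
  set s : Fin (2 * N) → ℝ := S i1 with hs
  have h1 : r ⬝ᵥ (Jmat (2 * N) *ᵥ s) = 1 := by
    have h := congrFun (congrFun hSJ i0) i1
    rw [hentry] at h
    rw [h]
    show Jmat (2 * N) i0 i1 = 1
    have e0 : ((i0 : Fin (2 * N)) : ℕ) = 2 * j := rfl
    have e1 : ((i1 : Fin (2 * N)) : ℕ) = 2 * j + 1 := rfl
    simp [Jmat, e0, e1, Nat.mul_mod_right]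
  have h2 : r ⬝ᵥ A *ᵥ r = lam j := by
    have h := congrFun (congrFun hSD i0) i0
    rw [hentry] at h
    rw [h]
    show Dmat (2 * N) lam i0 i0 = lam j
    simp only [Dmat, Matrix.diagonal_apply_eq]
    congr 1
    show 2 * j / 2 = j
    omega
  have h3 : s ⬝ᵥ A *ᵥ s = lam j := by
    have h := congrFun (congrFun hSD i1) i1
    rw [hentry] at h
    rw [h]
    show Dmat (2 * N) lam i1 i1 = lam j
    simp only [Dmat, Matrix.diagonal_apply_eq]
    congr 1
    show (2 * j + 1) / 2 = j
    omega
  have hC : (r ⬝ᵥ (Jmat (2 * N) *ᵥ s)) ^ 2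
      ≤ (∑ i, r i ^ 2) * (∑ i, ((Jmat (2 * N) *ᵥ s) i) ^ 2) := by
    simp only [dotProduct]
    exact Finset.sum_mul_sq_le_sq_mul_sq Finset.univ _ _
  rw [h1, sum_sq_Jmat_mulVec] at hC
  have h4 : α * (∑ i, r i ^ 2) ≤ lam j := h2 ▸ hA r
  have h5 : α * (∑ i, s i ^ 2) ≤ lam j := h3 ▸ hA s
  have hr0 : (0 : ℝ) ≤ ∑ i, r i ^ 2 := Finset.sum_nonneg fun i _ => sq_nonneg _
  have hs0 : (0 : ℝ) ≤ ∑ i, s i ^ 2 := Finset.sum_nonneg fun i _ => sq_nonneg _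
  have hlam0 : 0 ≤ lam j := le_trans (by positivity) h4
  nlinarith [mul_le_mul h4 h5 (mul_nonneg hα.le hs0) hlam0, hC, hα, hlam0]


set_option maxHeartbeats 1600000 in
/-- Perturbation of the symplectic spectrum to zeroth order (Lemma 3.1). -/
theorem symplectic_perturbation_zeroth (N : ℕ) (hN : 1 ≤ N)
    (M : Matrix (Fin (2 * N)) (Fin (2 * N)) ℝ) (hM : M.PosSemidef) :
    ∃ C > (0 : ℝ), ∃ eps₀ > (0 : ℝ), ∀ eps : ℝ, 0 < eps → eps < eps₀ →
      (1 + eps • M).PosDef ∧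
      ∀ (S : Matrix (Fin (2 * N)) (Fin (2 * N)) ℝ) (lam : ℕ → ℝ),
        IsSymplectic S → S * (1 + eps • M) * S.transpose = Dmat (2 * N) lam →
        ∀ j < N, |lam j - 1| ≤ C * eps := by
  classical
  set c2 : ℝ := ∑ i, ∑ k, (M i k) ^ 2 with hc2def
  have hc2 : 0 ≤ c2 := Finset.sum_nonneg fun i _ => Finset.sum_nonneg fun k _ => sq_nonneg _
  set c : ℝ := c2 + 1 with hcdef
  clear_value c2 c
  have hc : 1 ≤ c := by linarith
  have hc0 : 0 < c := by linarith
  refine ⟨2 * c, by linarith, 1 / (2 * c), by positivity, ?_⟩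
  intro eps heps hepslt
  have hepsc : eps * c < 1 / 2 := by
    have h2c : (0 : ℝ) < 2 * c := by positivity
    rw [lt_div_iff₀ h2c] at hepslt
    nlinarith
  -- quadratic form facts for M
  have hMq : ∀ y : Fin (2 * N) → ℝ, 0 ≤ y ⬝ᵥ M *ᵥ y := by
    intro y
    simpa using hM.dotProduct_mulVec_nonneg y
  have hdotsq : ∀ y : Fin (2 * N) → ℝ, y ⬝ᵥ y = ∑ i, y i ^ 2 := by
    intro y
    simp only [dotProduct]
    exact Finset.sum_congr rfl fun i _ => (sq (y i)).symm
  have hp : ∀ y : Fin (2 * N) → ℝ, (M *ᵥ y) ⬝ᵥ (M *ᵥ y) ≤ c2 * (∑ i, y i ^ 2) := by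
    intro y
    rw [hdotsq]
    have hterm : ∀ i : Fin (2 * N), ((M *ᵥ y) i) ^ 2 ≤ (∑ k, (M i k) ^ 2) * (∑ k, y k ^ 2) := by
      intro i
      simpa [Matrix.mulVec, dotProduct] using
        Finset.sum_mul_sq_le_sq_mul_sq Finset.univ (fun k => M i k) y
    calc ∑ i, ((M *ᵥ y) i) ^ 2 ≤ ∑ i, (∑ k, (M i k) ^ 2) * (∑ k, y k ^ 2) :=
          Finset.sum_le_sum fun i _ => hterm i
      _ = c2 * (∑ i, y i ^ 2) := by rw [hc2def, Finset.sum_mul]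
  have hq : ∀ y : Fin (2 * N) → ℝ, y ⬝ᵥ (M *ᵥ y) ≤ c * (∑ i, y i ^ 2) := by
    intro y
    have hn : (0 : ℝ) ≤ ∑ i, y i ^ 2 := Finset.sum_nonneg fun i _ => sq_nonneg _
    have hq2 : (y ⬝ᵥ (M *ᵥ y)) ^ 2 ≤ (∑ i, y i ^ 2) * (c2 * (∑ i, y i ^ 2)) := by
      have hcs : (y ⬝ᵥ (M *ᵥ y)) ^ 2 ≤ (∑ i, y i ^ 2) * (∑ i, ((M *ᵥ y) i) ^ 2) := by
        simpa [dotProduct] using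
          Finset.sum_mul_sq_le_sq_mul_sq Finset.univ y (fun i => (M *ᵥ y) i)
      refine hcs.trans (mul_le_mul_of_nonneg_left ?_ hn)
      have := hp y
      rwa [hdotsq] at this
    have hc2c : c2 ≤ c * c := by nlinarith
    have hq0 := hMq y
    have hcn : (y ⬝ᵥ M *ᵥ y) ^ 2 ≤ (c * (∑ i, y i ^ 2)) ^ 2 := by
      nlinarith [hq2, mul_nonneg (sub_nonneg.2 hc2c) (mul_nonneg hn hn)]
    exact (pow_le_pow_iff_left₀ hq0 (mul_nonneg hc0.le hn) two_ne_zero).mp hcn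
  set A : Matrix (Fin (2 * N)) (Fin (2 * N)) ℝ := 1 + eps • M with hAdef
  have hAmv : ∀ y : Fin (2 * N) → ℝ, A *ᵥ y = y + eps • (M *ᵥ y) := by
    intro y
    rw [hAdef, Matrix.add_mulVec, Matrix.one_mulVec, Matrix.smul_mulVec]
  have hquadA : ∀ y : Fin (2 * N) → ℝ, y ⬝ᵥ A *ᵥ y = (∑ i, y i ^ 2) + eps * (y ⬝ᵥ M *ᵥ y) := by
    intro y
    rw [hAmv, dotProduct_add, dotProduct_smul, hdotsq, smul_eq_mul]
  have hAherm : A.IsHermitian := by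
    have h1 : (1 : Matrix (Fin (2 * N)) (Fin (2 * N)) ℝ).IsHermitian := Matrix.isHermitian_one
    have h2 : (eps • M).IsHermitian := by
      rw [Matrix.IsHermitian, Matrix.conjTranspose_smul, hM.1.eq]
      simp
    exact h1.add h2
  have hApos : A.PosDef := by
    refine Matrix.PosDef.of_dotProduct_mulVec_pos hAherm fun x hx => ?_
    have hx2 : 0 < ∑ i, x i ^ 2 := by
      obtain ⟨i, hi⟩ := Function.ne_iff.mp hx
      have h1 : (0 : ℝ) < x i ^ 2 := by
        have hxi : x i ≠ 0 := by simpa using hi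
        positivity
      have h2 : x i ^ 2 ≤ ∑ i, x i ^ 2 :=
        Finset.single_le_sum (fun k _ => sq_nonneg (x k)) (Finset.mem_univ i)
      linarith
    have := hquadA x
    simp only [star_trivial]
    rw [this]
    nlinarith [hMq x]
  refine ⟨hApos, ?_⟩
  intro S lam hSymp hSD j hj
  have hSJ : S * Jmat (2 * N) * S.transpose = Jmat (2 * N) := hSymp
  -- Step 1 : lower bound 1 ≤ lam
  have hA1 : ∀ x : Fin (2 * N) → ℝ, (1 : ℝ) * (∑ i, x i ^ 2) ≤ x ⬝ᵥ A *ᵥ x := by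
    intro x
    rw [hquadA, one_mul]
    nlinarith [hMq x]
  have hlow : ∀ j' < N, 1 ≤ lam j' := fun j' hj' =>
    key_lower A S lam 1 one_pos hSJ hA1 hSD j' hj'
  -- invertibility of S and A
  have hdetJ : (Jmat (2 * N)).det ≠ 0 := by
    intro h
    have := Jmat_det_mul_self (N := N)
    rw [h] at this
    norm_num at this
  have hdetS : IsUnit S.det := by
    have h := congrArg Matrix.det hSJ
    rw [Matrix.det_mul, Matrix.det_mul, Matrix.det_transpose] at h
    have hSS : S.det * S.det = 1 := by
      have h2 : (S.det * S.det - 1) * (Jmat (2 * N)).det = 0 := by linear_combination h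
      rcases mul_eq_zero.mp h2 with h3 | h3
      · linarith [h3]
      · exact absurd h3 hdetJ
    exact IsUnit.of_mul_eq_one _ hSS
  have hdetA : IsUnit A.det := hApos.det_pos.ne'.isUnit
  have hdetST : IsUnit S.transpose.det := by rwa [Matrix.det_transpose]
  -- symplectic property of T := (Sᵀ)⁻¹
  have hTt : (S.transpose⁻¹).transpose = S⁻¹ := by
    rw [Matrix.transpose_nonsing_inv, Matrix.transpose_transpose]
  have hTJ : S.transpose⁻¹ * Jmat (2 * N) * (S.transpose⁻¹).transpose = Jmat (2 * N) := by
    have h := congrArg Inv.inv hSJ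
    rw [Matrix.mul_inv_rev, Matrix.mul_inv_rev, Jmat_inv] at h
    rw [hTt, Matrix.mul_assoc]
    rw [neg_mul, mul_neg, neg_inj] at h
    exact h
  -- inverse of the diagonal matrix
  have hlamne : ∀ i : Fin (2 * N), lam ((i : ℕ) / 2) ≠ 0 := by
    intro i
    have hi : (i : ℕ) / 2 < N := by have := i.isLt; omega
    have := hlow _ hi
    linarith
  have hDinv : (Dmat (2 * N) lam)⁻¹ = Dmat (2 * N) (fun j' => (lam j')⁻¹) := by
    apply Matrix.inv_eq_right_inv
    have hd : Dmat (2 * N) lam * Dmat (2 * N) (fun j' => (lam j')⁻¹)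
        = Matrix.diagonal (fun i : Fin (2 * N) => lam ((i : ℕ) / 2) * (lam ((i : ℕ) / 2))⁻¹) :=
      Matrix.diagonal_mul_diagonal _ _
    rw [hd, show (fun i : Fin (2 * N) => lam ((i : ℕ) / 2) * (lam ((i : ℕ) / 2))⁻¹)
      = fun _ => (1 : ℝ) from funext fun i => mul_inv_cancel₀ (hlamne i)]
    exact Matrix.diagonal_one
  have hTD : S.transpose⁻¹ * A⁻¹ * (S.transpose⁻¹).transpose
      = Dmat (2 * N) (fun j' => (lam j')⁻¹) := by
    have h := congrArg Inv.inv hSD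
    rw [Matrix.mul_inv_rev, Matrix.mul_inv_rev, hDinv] at h
    rw [hTt, Matrix.mul_assoc]
    exact h
  -- quadratic form lower bound for A⁻¹
  have hAinvq : ∀ x : Fin (2 * N) → ℝ,
      (1 - eps * c) * (∑ i, x i ^ 2) ≤ x ⬝ᵥ A⁻¹ *ᵥ x := by
    intro x
    set y : Fin (2 * N) → ℝ := A⁻¹ *ᵥ x with hy
    have hxy : A *ᵥ y = x := by
      rw [hy, Matrix.mulVec_mulVec, Matrix.mul_nonsing_inv _ hdetA, Matrix.one_mulVec]
    have hrhs : x ⬝ᵥ A⁻¹ *ᵥ x = (∑ i, y i ^ 2) + eps * (y ⬝ᵥ M *ᵥ y) := by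
      rw [← hy, ← hxy, dotProduct_comm, hquadA]
    set n : ℝ := ∑ i, y i ^ 2 with hn
    set q : ℝ := y ⬝ᵥ M *ᵥ y with hqq
    set p : ℝ := (M *ᵥ y) ⬝ᵥ (M *ᵥ y) with hpp
    clear_value n q p
    have hlhs : ∑ i, x i ^ 2 = n + 2 * eps * q + eps ^ 2 * p := by
      rw [← hdotsq, ← hxy, hAmv y, dotProduct_add, add_dotProduct,
        add_dotProduct, dotProduct_smul, smul_dotProduct,
        smul_dotProduct, dotProduct_smul, hdotsq,
        dotProduct_comm (M *ᵥ y) y]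
      simp only [smul_eq_mul, ← hn, ← hqq, ← hpp]
      ring
    rw [hrhs, hlhs]
    have hn0 : 0 ≤ n := by
      rw [hn]; exact Finset.sum_nonneg fun i _ => sq_nonneg _
    have hq0 : 0 ≤ q := by rw [hqq]; exact hMq y
    have hp0 : 0 ≤ p := by
      rw [hpp, hdotsq]
      exact Finset.sum_nonneg fun i _ => sq_nonneg _
    have hqn : q ≤ c * n := by rw [hqq, hn]; exact hq y
    have hpn : p ≤ c2 * n := by rw [hpp, hn]; exact hp y
    have h1 : 0 ≤ eps * ((c * n - q) * (1 - 2 * (eps * c))) :=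
      mul_nonneg heps.le (mul_nonneg (by linarith) (by linarith))
    have h3 : p ≤ 2 * c * c * n := by
      nlinarith [hpn, mul_nonneg (sub_nonneg.2 (show c2 ≤ 2 * c * c by nlinarith [hc2, sq_nonneg c2, hcdef])) hn0]
    have h4 : 0 ≤ eps * eps * (2 * c * c * n - p) :=
      mul_nonneg (mul_nonneg heps.le heps.le) (by linarith)
    have h5 : 0 ≤ eps * eps * eps * c * p := by positivity
    nlinarith [h1, h4, h5]
  -- Step 2 : apply key lemma to the inverse
  have hαpos : (0 : ℝ) < 1 - eps * c := by linarith
  have hupp : 1 - eps * c ≤ (lam j)⁻¹ :=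
    key_lower A⁻¹ S.transpose⁻¹ (fun j' => (lam j')⁻¹) (1 - eps * c) hαpos hTJ hAinvq hTD j hj
  have hl1 : 1 ≤ lam j := hlow j hj
  have hlpos : 0 < lam j := by linarith
  have hmul : (1 - eps * c) * lam j ≤ 1 := by
    have := mul_le_mul_of_nonneg_right hupp hlpos.le
    rwa [inv_mul_cancel₀ (ne_of_gt hlpos)] at this
  have hlam2 : lam j ≤ 2 := by nlinarith
  rw [abs_le]
  constructor
  · nlinarith
  · nlinarith

end
end

section
/- Scaling of entropy in the infinite-time limit under diffusion (Lemma 4.1): Let N ≥ 1 and let M be a real symmetric positive-semidefinite 2N×2N matrix. Then lim_{t→∞} ( E(M + t·I_{2N}) − N·g((t−1)/2) ) = 0; that is, for every δ > 0 there is T > 1 such that for all t ≥ T, |E(M + t·I_{2N}) − N·g((t−1)/2)| < δ. -/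
open scoped Classical ComplexOrder

noncomputable section

section EntropyHelpers
open Matrix


lemma gFn_hasDeriv {x : ℝ} (hx : 0 < x) :
    HasDerivAt gFn (Real.log (x + 1) - Real.log x) x := by
  have h1 : HasDerivAt (fun y : ℝ => (y + 1) * Real.log (y + 1)) (Real.log (x + 1) + 1) x := by
    have := (Real.hasDerivAt_mul_log (x := x + 1) (by positivity)).comp x
      ((hasDerivAt_id x).add_const 1)
    simpa [Function.comp_def] using this
  have h2 : HasDerivAt (fun y : ℝ => y * Real.log y) (Real.log x + 1) x :=
    Real.hasDerivAt_mul_log hx.ne'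
  have h := h1.sub h2
  have : Real.log (x + 1) + 1 - (Real.log x + 1) = Real.log (x + 1) - Real.log x := by ring
  rw [this] at h
  exact h

lemma gFn_lip {a b : ℝ} (ha : 0 < a) (hab : a ≤ b) : |gFn b - gFn a| ≤ (b - a) / a := by
  have hdiff : ∀ x ∈ Set.Ici a, HasDerivAt gFn (Real.log (x + 1) - Real.log x) x :=
    fun x hx => gFn_hasDeriv (lt_of_lt_of_le ha hx)
  have hbound : ∀ x ∈ Set.Ici a, ‖Real.log (x + 1) - Real.log x‖ ≤ 1 / a := by
    intro x hx
    have hxpos : 0 < x := lt_of_lt_of_le ha hx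
    have h1 : Real.log (x+1) - Real.log x = Real.log ((x+1)/x) := by
      rw [Real.log_div (by positivity) hxpos.ne']
    have h2 : 0 ≤ Real.log (x+1) - Real.log x := by
      have := Real.log_le_log (by positivity) (by linarith : x ≤ x + 1)
      linarith
    have h3 : Real.log ((x+1)/x) ≤ (x+1)/x - 1 :=
      Real.log_le_sub_one_of_pos (by positivity)
    have h4 : (x+1)/x - 1 = 1/x := by field_simp; ring
    rw [Real.norm_eq_abs, abs_of_nonneg h2, h1]
    calc Real.log ((x+1)/x) ≤ 1/x := by rw [← h4]; exact h3
      _ ≤ 1/a := one_div_le_one_div_of_le ha hx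
  have := Convex.norm_image_sub_le_of_norm_hasDerivWithin_le
    (fun x hx => (hdiff x hx).hasDerivWithinAt) hbound (convex_Ici a)
    (Set.self_mem_Ici) (hab : b ∈ Set.Ici a)
  rw [Real.norm_eq_abs] at this
  calc |gFn b - gFn a| ≤ (1/a) * ‖b - a‖ := this
    _ = (b - a)/a := by rw [Real.norm_eq_abs, abs_of_nonneg (by linarith)]; ring

def cnsq {n : ℕ} (x : Fin n → ℂ) : ℝ := ∑ i, Complex.normSq (x i)

lemma cnsq_nonneg {n : ℕ} (x : Fin n → ℂ) : 0 ≤ cnsq x :=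
  Finset.sum_nonneg fun i _ => Complex.normSq_nonneg _

lemma cnsq_pos {n : ℕ} {x : Fin n → ℂ} (hx : x ≠ 0) : 0 < cnsq x := by
  obtain ⟨i, hi⟩ : ∃ i, x i ≠ 0 := by
    by_contra h; push_neg at h; exact hx (funext h)
  exact Finset.sum_pos' (fun j _ => Complex.normSq_nonneg _)
    ⟨i, Finset.mem_univ i, Complex.normSq_pos.mpr hi⟩

lemma dot_star_self {n : ℕ} (x : Fin n → ℂ) :
    dotProduct (star x) x = (cnsq x : ℂ) := by
  simp only [dotProduct, cnsq, Pi.star_apply, Complex.ofReal_sum]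
  exact Finset.sum_congr rfl fun i _ => by
    rw [RCLike.star_def, Complex.normSq_eq_conj_mul_self]

lemma cnsq_smul {n : ℕ} (c : ℂ) (x : Fin n → ℂ) :
    cnsq (c • x) = Complex.normSq c * cnsq x := by
  simp only [cnsq, Pi.smul_apply, smul_eq_mul, Complex.normSq_mul, Finset.mul_sum]

lemma cs_re_sq {n : ℕ} (a b : Fin n → ℂ) :
    ((dotProduct (star a) b).re)^2 ≤ cnsq a * cnsq b := by
  have h1 : ‖dotProduct (star a) b‖ ≤ ∑ i, ‖a i‖ * ‖b i‖ := by
    refine (norm_sum_le _ _).trans ?_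
    refine Finset.sum_le_sum fun i _ => ?_
    rw [norm_mul, Pi.star_apply, norm_star]
  have h2 : (∑ i, ‖a i‖ * ‖b i‖)^2 ≤ (∑ i, ‖a i‖^2) * (∑ i, ‖b i‖^2) :=
    Finset.sum_mul_sq_le_sq_mul_sq _ _ _
  have h3 : |(dotProduct (star a) b).re| ≤ ‖dotProduct (star a) b‖ :=
    Complex.abs_re_le_norm _
  have h4 : cnsq a = ∑ i, ‖a i‖^2 := by
    simp [cnsq, Complex.normSq_eq_norm_sq]
  have h5 : cnsq b = ∑ i, ‖b i‖^2 := by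
    simp [cnsq, Complex.normSq_eq_norm_sq]
  rw [h4, h5]
  calc ((dotProduct (star a) b).re)^2 ≤ ‖dotProduct (star a) b‖^2 := by
        rw [← sq_abs]; exact pow_le_pow_left₀ (abs_nonneg _) h3 2
    _ ≤ (∑ i, ‖a i‖ * ‖b i‖)^2 := pow_le_pow_left₀ (norm_nonneg _) h1 2
    _ ≤ _ := h2

lemma herm_dot {n : ℕ} (R : Matrix (Fin n) (Fin n) ℂ) (x y : Fin n → ℂ) :
    dotProduct (star x) ((Rᴴ * R) *ᵥ y)
      = dotProduct (star (R *ᵥ x)) (R *ᵥ y) := by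
  rw [← Matrix.mulVec_mulVec, Matrix.dotProduct_mulVec, Matrix.vecMul_conjTranspose, star_star]

lemma psd_exists_sqrt {n : ℕ} {𝕜 : Type*} [RCLike 𝕜] {A : Matrix (Fin n) (Fin n) 𝕜}
    (hA : A.PosSemidef) : ∃ B : Matrix (Fin n) (Fin n) 𝕜, A = Bᴴ * B := by
  open scoped MatrixOrder in
  obtain ⟨B, hB⟩ := CStarAlgebra.nonneg_iff_eq_star_mul_self.mp hA.nonneg
  exact ⟨B, hB⟩

lemma exists_C {n : ℕ} (M : Matrix (Fin n) (Fin n) ℝ) (hM : M.PosSemidef) :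
    ∃ C : ℝ, 0 ≤ C ∧ ∃ B : Matrix (Fin n) (Fin n) ℂ,
      M.map Complex.ofReal = Bᴴ * B ∧
      ∀ x : Fin n → ℂ, cnsq (B *ᵥ x) ≤ C * cnsq x := by
  obtain ⟨B₀, hB₀⟩ := psd_exists_sqrt hM
  refine ⟨∑ j, ∑ k, (B₀ j k)^2, by positivity, B₀.map Complex.ofReal, ?_, ?_⟩
  · rw [hB₀]
    ext i j
    simp only [Matrix.map_apply, Matrix.mul_apply, Matrix.conjTranspose_apply,
      RCLike.star_def, Complex.ofReal_sum]
    push_cast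
    simp
  · intro x
    have hentry : ∀ j, Complex.normSq ((B₀.map Complex.ofReal *ᵥ x) j)
        ≤ (∑ k, (B₀ j k)^2) * cnsq x := by
      intro j
      have h1 : ‖(B₀.map Complex.ofReal *ᵥ x) j‖ ≤ ∑ k, |B₀ j k| * ‖x k‖ := by
        rw [Matrix.mulVec]
        refine (norm_sum_le _ _).trans (Finset.sum_le_sum fun k _ => ?_)
        simp [Matrix.map_apply, norm_mul, Complex.norm_real, Real.norm_eq_abs]
      have h2 : (∑ k, |B₀ j k| * ‖x k‖)^2 ≤ (∑ k, |B₀ j k|^2) * (∑ k, ‖x k‖^2) :=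
        Finset.sum_mul_sq_le_sq_mul_sq _ _ _
      have h3 : Complex.normSq ((B₀.map Complex.ofReal *ᵥ x) j)
          = ‖(B₀.map Complex.ofReal *ᵥ x) j‖^2 := by
        rw [Complex.normSq_eq_norm_sq]
      rw [h3]
      calc ‖(B₀.map Complex.ofReal *ᵥ x) j‖^2 ≤ (∑ k, |B₀ j k| * ‖x k‖)^2 :=
            pow_le_pow_left₀ (norm_nonneg _) h1 2
        _ ≤ (∑ k, |B₀ j k|^2) * (∑ k, ‖x k‖^2) := h2
        _ = (∑ k, (B₀ j k)^2) * cnsq x := by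
            congr 1
            · exact Finset.sum_congr rfl fun k _ => sq_abs _
            · simp [cnsq, Complex.normSq_eq_norm_sq]
    calc cnsq (B₀.map Complex.ofReal *ᵥ x) = ∑ j, Complex.normSq ((B₀.map Complex.ofReal *ᵥ x) j) := rfl
      _ ≤ ∑ j, (∑ k, (B₀ j k)^2) * cnsq x := Finset.sum_le_sum fun j _ => hentry j
      _ = (∑ j, ∑ k, (B₀ j k)^2) * cnsq x := by rw [Finset.sum_mul]
lemma Jmat_transpose (d : ℕ) : (Jmat d)ᵀ = -(Jmat d) := by
  ext i j
  simp only [Matrix.transpose_apply, Matrix.neg_apply, Jmat]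
  split_ifs with h1 h2 h3 <;> first | omega | norm_num | (exfalso; omega)

lemma Jmat_mul_self (N : ℕ) : Jmat (2*N) * Jmat (2*N) = -1 := by
  ext i j
  rw [Matrix.mul_apply]
  have hrhs : (-1 : Matrix (Fin (2*N)) (Fin (2*N)) ℝ) i j = if i = j then -1 else 0 := by
    by_cases h : i = j <;> simp [h, Matrix.one_apply]
  rw [hrhs]
  rcases Nat.even_or_odd (i : ℕ) with he | ho
  · have hii : (i:ℕ) % 2 = 0 := Nat.even_iff.mp he
    have hi1 : (i : ℕ) + 1 < 2*N := by have := i.isLt; omega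
    have hJ1 : Jmat (2*N) i ⟨(i:ℕ)+1, hi1⟩ = 1 := by
      simp [Jmat, hii]
    have hJ2 : Jmat (2*N) ⟨(i:ℕ)+1, hi1⟩ j = if i = j then -1 else 0 := by
      simp only [Jmat, Fin.val_mk]
      split_ifs with c1 c2 c3 c4 <;> first
        | rfl
        | omega
        | (exfalso; exact c3 (Fin.ext (by omega)))
        | (exfalso; subst c4; exact absurd ⟨hii, rfl⟩ c2)
    rw [Finset.sum_eq_single ⟨(i:ℕ)+1, hi1⟩]
    · rw [hJ1, hJ2, one_mul]
    · intro k _ hk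
      have hk' : (k : ℕ) ≠ (i:ℕ)+1 := fun h => hk (Fin.ext h)
      have : Jmat (2*N) i k = 0 := by
        simp only [Jmat]
        split_ifs with c1 c2 <;> first | rfl | omega
      rw [this, zero_mul]
    · intro h; exact absurd (Finset.mem_univ _) h
  · have hii : (i:ℕ) % 2 = 1 := Nat.odd_iff.mp ho
    have hi1 : (i : ℕ) - 1 < 2*N := by have := i.isLt; omega
    have hJ1 : Jmat (2*N) i ⟨(i:ℕ)-1, hi1⟩ = -1 := by
      simp only [Jmat, Fin.val_mk]
      split_ifs with c1 c2 <;> first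
        | rfl
        | omega
        | (exfalso; exact c2 ⟨by omega, by omega⟩)
    have hJ2 : Jmat (2*N) ⟨(i:ℕ)-1, hi1⟩ j = if i = j then 1 else 0 := by
      simp only [Jmat, Fin.val_mk]
      split_ifs with c1 c2 c3 c4 <;> first
        | rfl
        | omega
        | (exfalso; exact c2 (Fin.ext (by omega)))
        | (exfalso; subst c3; exact absurd ⟨by omega, by omega⟩ c1)
        | (exfalso; subst c4; omega)
    rw [Finset.sum_eq_single ⟨(i:ℕ)-1, hi1⟩]
    · rw [hJ1, hJ2]
      by_cases h : i = j <;> simp [h]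
    · intro k _ hk
      have hk' : (k : ℕ) ≠ (i:ℕ)-1 := fun h => hk (Fin.ext h)
      have : Jmat (2*N) i k = 0 := by
        simp only [Jmat]
        split_ifs with c1 c2 <;> first | rfl | omega
      rw [this, zero_mul]
    · intro h; exact absurd (Finset.mem_univ _) h

lemma map_mul_ofReal {n : ℕ} (P Q : Matrix (Fin n) (Fin n) ℝ) :
    (P * Q).map Complex.ofReal = P.map Complex.ofReal * Q.map Complex.ofReal := by
  ext i j
  simp only [Matrix.map_apply, Matrix.mul_apply, Complex.ofReal_sum, Complex.ofReal_mul]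

lemma arith_low {t a cv cp m2 : ℝ} (ht : 0 < t) (ha : 0 < a) (hcv : 0 < cv) (hcp : 0 ≤ cp)
    (e1 : t * cp ≤ m2 * a) (e2 : a^2 ≤ cv * cp) (e3 : t * cv ≤ a) : t^2 ≤ m2 := by
  have A1 : t * cp * cv ≤ m2 * a * cv := mul_le_mul_of_nonneg_right e1 hcv.le
  have A2 : t * a^2 ≤ t * (cv * cp) := mul_le_mul_of_nonneg_left e2 ht.le
  have A3 : (t * a) * (t * cv) ≤ (t * a) * a :=
    mul_le_mul_of_nonneg_left e3 (mul_pos ht ha).le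
  have key : t^2 * (a * cv) ≤ m2 * (a * cv) := by nlinarith
  exact le_of_mul_le_mul_right key (by positivity)

lemma arith_high {t C a cp m2 : ℝ} (ht : 0 < t) (hC : 0 ≤ C) (ha : 0 < a) (hcp : 0 ≤ cp)
    (e1 : m2 * a ≤ (t + C) * cp) (e2 : cp^2 ≤ (t + C) * cp * a) : m2 ≤ (t + C)^2 := by
  have h2 : cp ≤ (t + C) * a := by
    rcases eq_or_lt_of_le hcp with h | h
    · rw [← h]; positivity
    · have := le_of_mul_le_mul_right (by nlinarith : cp * cp ≤ ((t + C) * a) * cp) h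
      linarith
  have key : m2 * a ≤ (t + C)^2 * a := by nlinarith
  exact le_of_mul_le_mul_right key ha

lemma abs_bounds {t C r : ℝ} (ht : 0 < t) (hC : 0 ≤ C) (h1 : t^2 ≤ r^2)
    (h2 : r^2 ≤ (t + C)^2) : t ≤ |r| ∧ |r| ≤ t + C := by
  constructor
  · nlinarith [abs_nonneg r, sq_abs r]
  · nlinarith [abs_nonneg r, sq_abs r]

lemma root_bound (N : ℕ) (M : Matrix (Fin (2*N)) (Fin (2*N)) ℝ) (hM : M.PosSemidef) :
    ∃ C : ℝ, 0 ≤ C ∧ ∀ t : ℝ, 0 < t →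
      ∀ μ ∈ (Matrix.charpoly
        (Complex.I • ((Jmat (2*N) * (M + t • 1)).map Complex.ofReal))).roots,
        μ.im = 0 ∧ t ≤ |μ.re| ∧ |μ.re| ≤ t + C := by
  classical
  obtain ⟨C, hC0, B, hB, hBb⟩ := exists_C M hM
  refine ⟨C, hC0, ?_⟩
  intro t ht μ hμ
  set Jc : Matrix (Fin (2*N)) (Fin (2*N)) ℂ := (Jmat (2*N)).map Complex.ofReal with hJc
  set Mc : Matrix (Fin (2*N)) (Fin (2*N)) ℂ := M.map Complex.ofReal with hMc
  set Xc : Matrix (Fin (2*N)) (Fin (2*N)) ℂ := Mc + (t:ℂ) • 1 with hXcdef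
  have hXmap : (M + t • (1 : Matrix (Fin (2*N)) (Fin (2*N)) ℝ)).map Complex.ofReal = Xc := by
    ext i j
    simp only [Matrix.map_apply, Matrix.add_apply, Matrix.smul_apply, Matrix.one_apply,
      hXcdef, hMc, smul_eq_mul, Complex.ofReal_add, Complex.ofReal_mul]
    congr 1
    split_ifs <;> simp
  set A : Matrix (Fin (2*N)) (Fin (2*N)) ℂ :=
    Complex.I • ((Jmat (2*N) * (M + t • 1)).map Complex.ofReal) with hAdef
  have hA : A = Complex.I • (Jc * Xc) := by
    rw [hAdef, map_mul_ofReal, hXmap]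
  -- eigenvector from the root
  have hroot : (Matrix.charpoly A).IsRoot μ := Polynomial.isRoot_of_mem_roots hμ
  have heval : (Matrix.charpoly A).eval μ
      = (μ • (1 : Matrix (Fin (2*N)) (Fin (2*N)) ℂ) - A).det := by
    rw [Matrix.charpoly, eval_det, Matrix.matPolyEquiv_charmatrix]
    simp only [Polynomial.eval_sub, Polynomial.eval_X, Polynomial.eval_C]
    congr 1
    ext i j
    simp [Matrix.scalar_apply, Matrix.smul_apply, Matrix.one_apply, Matrix.diagonal]
  have hdet0 : (μ • (1 : Matrix (Fin (2*N)) (Fin (2*N)) ℂ) - A).det = 0 := by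
    rw [← heval]; exact hroot
  obtain ⟨v, hv0, hv⟩ := (Matrix.exists_mulVec_eq_zero_iff).mpr hdet0
  have heig : A *ᵥ v = μ • v := by
    have h1 : (μ • (1 : Matrix (Fin (2*N)) (Fin (2*N)) ℂ) - A) *ᵥ v
        = μ • v - A *ᵥ v := by
      rw [Matrix.sub_mulVec, Matrix.smul_mulVec, Matrix.one_mulVec]
    rw [h1] at hv
    linear_combination (norm := module) -hv
  -- basic J facts over ℂ
  have hJcH : Jcᴴ = -Jc := by
    ext i j
    have h := congrFun (congrFun (Jmat_transpose (2*N)) i) j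
    simp only [Matrix.transpose_apply, Matrix.neg_apply] at h
    simp only [Matrix.conjTranspose_apply, Matrix.map_apply, hJc, Matrix.neg_apply,
      RCLike.star_def, h, Complex.ofReal_neg, map_neg, Complex.conj_ofReal]
  have hJcJc : Jc * Jc = -1 := by
    rw [hJc, ← map_mul_ofReal, Jmat_mul_self]
    ext i j
    simp only [Matrix.map_apply, Matrix.neg_apply, Matrix.one_apply]
    split_ifs <;> simp
  -- vectors
  set p : Fin (2*N) → ℂ := Xc *ᵥ v with hp
  set u : Fin (2*N) → ℂ := Jc *ᵥ p with hu0
  have heig2 : Complex.I • u = μ • v := by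
    rw [hA] at heig
    rw [hu0, hp, Matrix.mulVec_mulVec, ← Matrix.smul_mulVec]
    exact heig
  have hu : u = (-Complex.I * μ) • v := by
    have h := congrArg (fun w => (-Complex.I) • w) heig2
    simp only [smul_smul] at h
    have h2 : (-Complex.I * Complex.I) = 1 := by
      simp [Complex.I_mul_I]
    rw [h2, one_smul] at h
    exact h
  -- quadratic form
  set QX : (Fin (2*N) → ℂ) → ℝ := fun x => cnsq (B *ᵥ x) + t * cnsq x with hQXdef
  have hQX : ∀ x, dotProduct (star x) (Xc *ᵥ x) = (QX x : ℂ) := by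
    intro x
    rw [hXcdef, Matrix.add_mulVec, Matrix.smul_mulVec, Matrix.one_mulVec,
      dotProduct_add, dotProduct_smul]
    rw [hB, herm_dot, dot_star_self, dot_star_self, smul_eq_mul]
    norm_cast
  have hQXlow : ∀ x, t * cnsq x ≤ QX x := fun x => by
    have := cnsq_nonneg (B *ᵥ x); simp only [hQXdef]; linarith
  have hQXhigh : ∀ x, QX x ≤ (t + C) * cnsq x := fun x => by
    have := hBb x; simp only [hQXdef]; linarith
  set α : ℝ := QX v with hαdef
  have hcv : 0 < cnsq v := cnsq_pos hv0
  have hα : 0 < α := lt_of_lt_of_le (by positivity) (hQXlow v)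
  have hq : dotProduct (star v) p = (α : ℂ) := by rw [hp]; exact hQX v
  -- reality of μ
  have hs : (dotProduct (star p) u).re = 0 := by
    have h1 : star (dotProduct (star p) u) = -(dotProduct (star p) u) := by
      rw [hu0, ← Matrix.star_dotProduct, Matrix.star_mulVec, hJcH, Matrix.vecMul_neg,
        neg_dotProduct, ← Matrix.dotProduct_mulVec]
    have := congrArg Complex.re h1
    simp only [Complex.star_def, Complex.conj_re, Complex.neg_re] at this
    linarith
  have heq1 : Complex.I * (dotProduct (star p) u) = μ * (α : ℂ) := by
    have h1 := congrArg (fun w => dotProduct (star p) w) heig2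
    simp only [dotProduct_smul, smul_eq_mul] at h1
    have h2 : dotProduct (star p) v = (α : ℂ) := by
      have : dotProduct (star p) v = star (dotProduct (star v) p) :=
        Matrix.star_dotProduct p v
      rw [this, hq]
      simp [Complex.star_def, Complex.conj_ofReal]
    rw [h2] at h1
    exact h1
  have hμim : μ.im = 0 := by
    have him := congrArg Complex.im heq1
    have h1 : (Complex.I * (dotProduct (star p) u)).im
        = (dotProduct (star p) u).re := by
      simp [Complex.mul_im]
    have h2 : (μ * (α : ℂ)).im = μ.im * α := by
      simp [Complex.mul_im]
    rw [h1, h2, hs] at him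
    have := him.symm
    rcases mul_eq_zero.mp this with h | h
    · exact h
    · exact absurd h (ne_of_gt hα)
  -- norm identities
  have hcup : cnsq u = cnsq p := by
    have h1 : dotProduct (star u) u = dotProduct (star p) p := by
      rw [hu0, Matrix.star_mulVec, hJcH, Matrix.vecMul_neg,
        neg_dotProduct, ← Matrix.dotProduct_mulVec, Matrix.mulVec_mulVec, hJcJc,
        Matrix.neg_mulVec, Matrix.one_mulVec, dotProduct_neg, neg_neg]
    have := h1
    rw [dot_star_self, dot_star_self] at this
    exact_mod_cast this
  have hm2 : Complex.normSq (-Complex.I * μ) = Complex.normSq μ := by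
    simp [Complex.normSq_mul]
  have hcu : cnsq u = Complex.normSq μ * cnsq v := by
    rw [hu, cnsq_smul, hm2]
  have hXu : QX u = Complex.normSq μ * α := by
    have h1 : dotProduct (star u) (Xc *ᵥ u) = (QX u : ℂ) := hQX u
    have h2 : dotProduct (star u) (Xc *ᵥ u)
        = (Complex.normSq (-Complex.I * μ) : ℂ) * (α : ℂ) := by
      rw [hu, Matrix.mulVec_smul, star_smul, smul_dotProduct,
        dotProduct_smul, hp] at *
      rw [hQX v] at *
      rw [smul_eq_mul, smul_eq_mul, ← mul_assoc]
      congr 1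
      rw [RCLike.star_def, Complex.normSq_eq_conj_mul_self]
    rw [h1, hm2] at h2
    exact_mod_cast h2
  -- Cauchy-Schwarz estimates
  have hcs1 : α^2 ≤ cnsq v * cnsq p := by
    have := cs_re_sq v p
    rw [hq] at this
    simpa using this
  -- factor Xc to get the second CS
  have hXcpsd : Xc.PosSemidef := by
    refine Matrix.PosSemidef.of_dotProduct_mulVec_nonneg ?_ ?_
    · show Xcᴴ = Xc
      rw [hXcdef, hB]
      rw [Matrix.conjTranspose_add, Matrix.conjTranspose_smul, Matrix.conjTranspose_one,
        Matrix.conjTranspose_mul, Matrix.conjTranspose_conjTranspose]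
      congr 1
      simp [Complex.star_def, Complex.conj_ofReal]
    · intro x
      rw [hQX x]
      have : ((0:ℝ) : ℂ) ≤ ((QX x : ℝ) : ℂ) := by
        rw [Complex.real_le_real]
        have := cnsq_nonneg (B *ᵥ x); have := cnsq_nonneg x
        have := hQXlow x
        nlinarith [cnsq_nonneg x]
      simpa using this
  obtain ⟨R, hR⟩ := psd_exists_sqrt hXcpsd
  have hQR : ∀ x, QX x = cnsq (R *ᵥ x) := by
    intro x
    have h1 := hQX x
    rw [hR, herm_dot, dot_star_self] at h1
    exact_mod_cast h1.symm
  have hcs2 : (cnsq p)^2 ≤ QX p * α := by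
    have h1 : dotProduct (star p) p
        = dotProduct (star (R *ᵥ p)) (R *ᵥ v) := by
      have haux : dotProduct (star p) (Xc *ᵥ v)
          = dotProduct (star (R *ᵥ p)) (R *ᵥ v) := by rw [hR, herm_dot]
      rw [← hp] at haux
      exact haux
    have h2 : cnsq p = (dotProduct (star (R *ᵥ p)) (R *ᵥ v)).re := by
      rw [← h1, dot_star_self]
      simp
    have h3 := cs_re_sq (R *ᵥ p) (R *ᵥ v)
    rw [← h2] at h3
    rw [hQR p, hαdef, hQR v]
    exact h3
  -- final bounds
  have e1 : t * cnsq p ≤ Complex.normSq μ * α := by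
    have := hQXlow u
    rw [hcup] at this
    rw [← hXu]
    exact this
  have e1' : Complex.normSq μ * α ≤ (t + C) * cnsq p := by
    have := hQXhigh u
    rw [hcup] at this
    rw [← hXu]
    exact this
  have e3 : t * cnsq v ≤ α := hQXlow v
  have e4 : QX p ≤ (t + C) * cnsq p := hQXhigh p
  have hcp : 0 ≤ cnsq p := cnsq_nonneg p
  have hlow : t^2 ≤ Complex.normSq μ :=
    arith_low ht hα hcv hcp e1 hcs1 e3
  have hhigh : Complex.normSq μ ≤ (t + C)^2 :=
    arith_high ht hC0 hα hcp e1' (le_trans hcs2 (by nlinarith))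
  have hre2 : Complex.normSq μ = μ.re^2 := by
    rw [Complex.normSq_apply, hμim]; ring
  rw [hre2] at hlow hhigh
  exact ⟨hμim, (abs_bounds ht hC0 hlow hhigh).1, (abs_bounds ht hC0 hlow hhigh).2⟩

lemma card_roots_charpoly {n : ℕ} (A : Matrix (Fin n) (Fin n) ℂ) :
    (Matrix.charpoly A).roots.card = n := by
  rw [Polynomial.splits_iff_card_roots.mp (IsAlgClosed.splits _)]
  simpa using Matrix.charpoly_natDegree_eq_dim A

lemma multiset_sum_bound (S : Multiset ℂ) (f : ℂ → ℝ) (b : ℝ)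
    (h : ∀ μ ∈ S, |f μ| ≤ b) : |(S.map f).sum| ≤ S.card * b := by
  induction S using Multiset.induction with
  | empty => simp
  | cons a s ih =>
    simp only [Multiset.map_cons, Multiset.sum_cons, Multiset.card_cons]
    have h1 := h a (Multiset.mem_cons_self a s)
    have h2 := ih (fun μ hμ => h μ (Multiset.mem_cons_of_mem hμ))
    calc |f a + (s.map f).sum| ≤ |f a| + |(s.map f).sum| := abs_add_le _ _
      _ ≤ b + s.card * b := add_le_add h1 h2
      _ = (s.card + 1) * b := by ring
      _ = ((s.card + 1 : ℕ) : ℝ) * b := by push_cast; ring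

lemma multiset_map_sub_const (S : Multiset ℂ) (f : ℂ → ℝ) (c : ℝ) :
    (S.map (fun μ => f μ - c)).sum = (S.map f).sum - S.card * c := by
  induction S using Multiset.induction with
  | empty => simp
  | cons a s ih =>
    simp only [Multiset.map_cons, Multiset.sum_cons, Multiset.card_cons, ih]
    push_cast
    ring

end EntropyHelpers

/-- Scaling of entropy in the infinite-time limit under diffusion (Lemma 4.1). -/
theorem entropy_infinite_time (N : ℕ) (hN : 1 ≤ N)
    (M : Matrix (Fin (2 * N)) (Fin (2 * N)) ℝ) (hM : M.PosSemidef) :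
    Filter.Tendsto (fun t : ℝ => Ent (M + t • 1) - (N : ℝ) * gFn ((t - 1) / 2))
      Filter.atTop (nhds 0) := by
  obtain ⟨C, hC0, hroots⟩ := root_bound N M hM
  have hg : Filter.Tendsto (fun t : ℝ => (N:ℝ) * C / (t - 1)) Filter.atTop (nhds 0) := by
    have h1 : Filter.Tendsto (fun t : ℝ => t - 1) Filter.atTop Filter.atTop := by
      simpa [sub_eq_add_neg] using Filter.tendsto_atTop_add_const_right Filter.atTop (-1 : ℝ) Filter.tendsto_id
    have h2 := h1.inv_tendsto_atTop
    have h3 := h2.const_mul ((N:ℝ) * C)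
    simpa [div_eq_mul_inv] using h3
  refine squeeze_zero_norm' ?_ hg
  filter_upwards [Filter.eventually_ge_atTop (2:ℝ)] with t ht2
  have ht : (0:ℝ) < t := by linarith
  set S := (Matrix.charpoly
    (Complex.I • ((Jmat (2*N) * (M + t • 1)).map Complex.ofReal))).roots with hS
  have hcard : Multiset.card S = 2*N := card_roots_charpoly _
  have hb : ∀ μ ∈ S, |GFn |μ.re| - gFn ((t-1)/2)| ≤ C / (t-1) := by
    intro μ hμ
    obtain ⟨him, hlo, hhi⟩ := hroots t ht μ hμ
    have ha : 0 < (t-1)/2 := by linarith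
    have hab : (t-1)/2 ≤ (|μ.re| - 1)/2 := by linarith
    have hlip := gFn_lip ha hab
    have h2 : ((|μ.re| - 1)/2 - (t-1)/2)/((t-1)/2) ≤ C/(t-1) := by
      rw [div_le_div_iff₀ ha (by linarith : (0:ℝ) < t - 1)]
      nlinarith
    calc |GFn |μ.re| - gFn ((t-1)/2)| = |gFn ((|μ.re| - 1)/2) - gFn ((t-1)/2)| := rfl
      _ ≤ ((|μ.re| - 1)/2 - (t-1)/2)/((t-1)/2) := hlip
      _ ≤ C/(t-1) := h2
  have hEnt : Ent (M + t • (1 : Matrix (Fin (2*N)) (Fin (2*N)) ℝ))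
      = (S.map fun μ => GFn |μ.re|).sum / 2 := rfl
  have hdiff : Ent (M + t • (1 : Matrix (Fin (2*N)) (Fin (2*N)) ℝ)) - (N:ℝ) * gFn ((t-1)/2)
      = (S.map (fun μ => GFn |μ.re| - gFn ((t-1)/2))).sum / 2 := by
    rw [hEnt, eq_div_iff (by norm_num : (2:ℝ) ≠ 0), sub_mul, div_mul_cancel₀ _ (by norm_num : (2:ℝ) ≠ 0), multiset_map_sub_const, hcard]
    push_cast
    ring
  have hsum := multiset_sum_bound S (fun μ => GFn |μ.re| - gFn ((t-1)/2)) (C/(t-1)) hb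
  rw [hcard] at hsum
  have h2N : ((2*N : ℕ):ℝ) = 2*(N:ℝ) := by push_cast; ring
  rw [h2N] at hsum
  rw [Real.norm_eq_abs, hdiff, abs_div, abs_two]
  calc |(S.map (fun μ => GFn |μ.re| - gFn ((t-1)/2))).sum| / 2
      ≤ (2*(N:ℝ)*(C/(t-1)))/2 := by linarith
    _ = (N:ℝ) * C / (t-1) := by ring

end
end
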